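/- arXiv:2309.12997 — 4 statements merged into one kernel-verified Lean document; each statement's English description precedes it below -/
import Mathlib

section
/- Let ρ_i = N(μ_i, σ²) for i = 1,…,N with distinct means, and ρ_θ = Σ_i p_i ρ_i with p_i > 0 summing to 1 fixed. Then for each pair i, j: lim_{σ→0} ∫_ℝ ρ_i(x) ρ_j(x) / ρ_θ(x) dx = δ_{ij} / p_i, where δ_{ij} is the Kronecker delta. -/
open MeasureTheory Real Filter

/-- The density of the Gaussian with mean `m` and standard deviation `σ`. -/
noncomputable def gaussPDF (m σ x : ℝ) : ℝ :=
  (1 / (Real.sqrt (2 * Real.pi) * σ)) * Real.exp (-(x - m) ^ 2 / (2 * σ ^ 2))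

lemma gaussPDF_pos (m : ℝ) {σ : ℝ} (hσ : 0 < σ) (x : ℝ) : 0 < gaussPDF m σ x := by
  unfold gaussPDF
  have := Real.pi_pos
  positivity

lemma continuous_gaussPDF (m σ : ℝ) : Continuous (gaussPDF m σ) := by
  unfold gaussPDF
  fun_prop

lemma gaussPDF_eq (m : ℝ) {σ : ℝ} (hσ : 0 < σ) :
    gaussPDF m σ = ProbabilityTheory.gaussianPDFReal m (⟨σ ^ 2, sq_nonneg σ⟩ : NNReal) := by
  funext x
  have h2π : (0:ℝ) ≤ 2 * Real.pi := by positivity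
  simp only [gaussPDF, ProbabilityTheory.gaussianPDFReal, NNReal.coe_mk]
  rw [Real.sqrt_mul h2π]
  change 1 / (Real.sqrt (2 * Real.pi) * σ) * Real.exp (-(x - m) ^ 2 / (2 * σ ^ 2)) =
    (Real.sqrt (2 * Real.pi) * Real.sqrt (σ ^ 2))⁻¹ * Real.exp (-(x - m) ^ 2 / (2 * σ ^ 2))
  rw [Real.sqrt_sq hσ.le, one_div]

lemma integrable_gaussPDF (m : ℝ) {σ : ℝ} (hσ : 0 < σ) : Integrable (gaussPDF m σ) := by
  rw [gaussPDF_eq m hσ]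
  exact ProbabilityTheory.integrable_gaussianPDFReal m _

lemma integral_gaussPDF (m : ℝ) {σ : ℝ} (hσ : 0 < σ) : ∫ x, gaussPDF m σ x = 1 := by
  rw [gaussPDF_eq m hσ]
  refine ProbabilityTheory.integral_gaussianPDFReal_eq_one m ?_
  intro h
  have : σ ^ 2 = 0 := congrArg NNReal.toReal h
  nlinarith

/-- Geometric mean of two Gaussians. -/
lemma sqrt_gaussPDF_mul (a b : ℝ) {σ : ℝ} (hσ : 0 < σ) (x : ℝ) :
    Real.sqrt (gaussPDF a σ x * gaussPDF b σ x)
      = Real.exp (-(a - b) ^ 2 / (8 * σ ^ 2)) * gaussPDF ((a + b) / 2) σ x := by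
  have hc : (0:ℝ) < 1 / (Real.sqrt (2 * Real.pi) * σ) := by
    have := Real.pi_pos; positivity
  unfold gaussPDF
  set c := 1 / (Real.sqrt (2 * Real.pi) * σ) with hcdef
  set A := -(x - a) ^ 2 / (2 * σ ^ 2) with hA
  set B := -(x - b) ^ 2 / (2 * σ ^ 2) with hB
  set C := -(x - (a + b) / 2) ^ 2 / (2 * σ ^ 2) with hC
  set D := -(a - b) ^ 2 / (8 * σ ^ 2) with hD
  have hAB : A + B = (D + D) + (C + C) := by
    rw [hA, hB, hC, hD]
    field_simp
    ring
  have key : c * Real.exp A * (c * Real.exp B) = (Real.exp D * (c * Real.exp C)) ^ 2 := by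
    calc c * Real.exp A * (c * Real.exp B) = c ^ 2 * Real.exp (A + B) := by
          rw [Real.exp_add]; ring
      _ = c ^ 2 * (Real.exp (D + D) * Real.exp (C + C)) := by rw [hAB, Real.exp_add]
      _ = (Real.exp D * (c * Real.exp C)) ^ 2 := by
          rw [Real.exp_add, Real.exp_add]; ring
  rw [key, Real.sqrt_sq]
  positivity

lemma exp_neg_div_sq_tendsto {c : ℝ} (hc : 0 < c) :
    Tendsto (fun σ : ℝ => Real.exp (-c / (8 * σ ^ 2))) (nhdsWithin 0 (Set.Ioi 0)) (nhds 0) := by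
  have h1 : Tendsto (fun σ : ℝ => σ ^ 2) (nhdsWithin 0 (Set.Ioi 0)) (nhdsWithin 0 (Set.Ioi 0)) := by
    rw [tendsto_nhdsWithin_iff]
    constructor
    · have : Tendsto (fun σ : ℝ => σ ^ 2) (nhds 0) (nhds 0) := by
        simpa using (continuous_pow 2).tendsto (0:ℝ)
      exact this.mono_left nhdsWithin_le_nhds
    · filter_upwards [self_mem_nhdsWithin] with σ hσ
      exact pow_pos (Set.mem_Ioi.mp hσ) 2
  have h2 : Tendsto (fun σ : ℝ => (c / 8) * (σ ^ 2)⁻¹) (nhdsWithin 0 (Set.Ioi 0)) atTop :=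
    (tendsto_inv_nhdsGT_zero.comp h1).const_mul_atTop (by positivity)
  have h3 : Tendsto (fun σ : ℝ => Real.exp (-((c / 8) * (σ ^ 2)⁻¹)))
      (nhdsWithin 0 (Set.Ioi 0)) (nhds 0) :=
    Real.tendsto_exp_neg_atTop_nhds_zero.comp h2
  refine h3.congr fun σ => ?_
  ring_nf

theorem mixture_overlap_limit (N : ℕ) (μ : Fin N → ℝ) (hμ : StrictMono μ)
    (p : Fin N → ℝ) (hp : ∀ i, 0 < p i) (hsum : ∑ i, p i = 1) (i j : Fin N) :
    Tendsto
      (fun σ : ℝ => ∫ x : ℝ,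
        gaussPDF (μ i) σ x * gaussPDF (μ j) σ x / (∑ k, p k * gaussPDF (μ k) σ x))
      (nhdsWithin 0 (Set.Ioi 0))
      (nhds (if i = j then 1 / p i else 0)) := by
  -- notation
  set S : ℝ → ℝ → ℝ := fun σ x => ∑ k, p k * gaussPDF (μ k) σ x with hS
  set g : Fin N → Fin N → ℝ → ℝ → ℝ :=
    fun a b σ x => gaussPDF (μ a) σ x * gaussPDF (μ b) σ x / S σ x with hg
  have hSpos : ∀ {σ : ℝ}, 0 < σ → ∀ x, 0 < S σ x := by
    intro σ hσ x
    exact Finset.sum_pos (fun k _ => mul_pos (hp k) (gaussPDF_pos _ hσ x)) ⟨i, Finset.mem_univ i⟩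
  have hle : ∀ (a : Fin N) {σ : ℝ}, 0 < σ → ∀ x, p a * gaussPDF (μ a) σ x ≤ S σ x := by
    intro a σ hσ x
    exact Finset.single_le_sum (fun k _ => (mul_pos (hp k) (gaussPDF_pos _ hσ x)).le)
      (Finset.mem_univ a)
  have hgnonneg : ∀ (a b : Fin N) {σ : ℝ}, 0 < σ → ∀ x, 0 ≤ g a b σ x := by
    intro a b σ hσ x
    exact div_nonneg (mul_nonneg (gaussPDF_pos _ hσ x).le (gaussPDF_pos _ hσ x).le)
      (hSpos hσ x).le
  -- pointwise bound  g a b ≤ gaussPDF b / p a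
  have hgle : ∀ (a b : Fin N) {σ : ℝ}, 0 < σ → ∀ x,
      g a b σ x ≤ (p a)⁻¹ * gaussPDF (μ b) σ x := by
    intro a b σ hσ x
    have h1 : g a b σ x ≤ gaussPDF (μ a) σ x * gaussPDF (μ b) σ x /
        (p a * gaussPDF (μ a) σ x) := by
      apply div_le_div_of_nonneg_left
        (mul_nonneg (gaussPDF_pos _ hσ x).le (gaussPDF_pos _ hσ x).le)
        (mul_pos (hp a) (gaussPDF_pos _ hσ x)) (hle a hσ x)
    calc g a b σ x ≤ _ := h1
      _ = (p a)⁻¹ * gaussPDF (μ b) σ x := by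
          rw [mul_comm (p a), mul_div_mul_left _ _ (ne_of_gt (gaussPDF_pos _ hσ x))]
          rw [div_eq_inv_mul]
  -- integrability
  have hgint : ∀ (a b : Fin N) {σ : ℝ}, 0 < σ → Integrable (g a b σ) := by
    intro a b σ hσ
    refine Integrable.mono ((integrable_gaussPDF (μ b) hσ).const_mul (p a)⁻¹) ?_ ?_
    · have hScont : Continuous (S σ) :=
        continuous_finset_sum _ fun k _ => continuous_const.mul (continuous_gaussPDF _ _)
      exact ((((continuous_gaussPDF _ _).mul (continuous_gaussPDF _ _)).div
        hScont (fun x => (hSpos hσ x).ne')).aestronglyMeasurable)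
    · refine Eventually.of_forall fun x => ?_
      rw [Real.norm_eq_abs, Real.norm_eq_abs, abs_of_nonneg (hgnonneg a b hσ x),
        abs_of_nonneg (mul_nonneg (inv_nonneg.2 (hp a).le) (gaussPDF_pos _ hσ x).le)]
      exact hgle a b hσ x
  -- geometric-mean bound on the integral
  have hoffbound : ∀ (a b : Fin N) {σ : ℝ}, 0 < σ →
      ∫ x, g a b σ x ≤ (Real.sqrt (p a * p b))⁻¹ * Real.exp (-(μ a - μ b) ^ 2 / (8 * σ ^ 2)) := by
    intro a b σ hσ
    have hbd : ∀ x, g a b σ x ≤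
        (Real.sqrt (p a * p b))⁻¹ *
          (Real.exp (-(μ a - μ b) ^ 2 / (8 * σ ^ 2)) * gaussPDF ((μ a + μ b) / 2) σ x) := by
      intro x
      set u := gaussPDF (μ a) σ x * gaussPDF (μ b) σ x with hu
      have hupos : 0 < u := mul_pos (gaussPDF_pos _ hσ x) (gaussPDF_pos _ hσ x)
      have hSsq : p a * p b * u ≤ (S σ x) ^ 2 := by
        have := mul_le_mul (hle a hσ x) (hle b hσ x)
          (mul_pos (hp b) (gaussPDF_pos _ hσ x)).le (hSpos hσ x).le
        calc p a * p b * u = (p a * gaussPDF (μ a) σ x) * (p b * gaussPDF (μ b) σ x) := by ring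
          _ ≤ S σ x * S σ x := this
          _ = (S σ x) ^ 2 := (sq (S σ x)).symm
      have hSge : Real.sqrt (p a * p b * u) ≤ S σ x := by
        calc Real.sqrt (p a * p b * u) ≤ Real.sqrt ((S σ x) ^ 2) := Real.sqrt_le_sqrt hSsq
          _ = S σ x := Real.sqrt_sq (hSpos hσ x).le
      have hsqrtpos : 0 < Real.sqrt (p a * p b * u) :=
        Real.sqrt_pos.2 (mul_pos (mul_pos (hp a) (hp b)) hupos)
      have h1 : g a b σ x ≤ u / Real.sqrt (p a * p b * u) :=
        div_le_div_of_nonneg_left hupos.le hsqrtpos hSge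
      have h2 : u / Real.sqrt (p a * p b * u) = (Real.sqrt (p a * p b))⁻¹ * Real.sqrt u := by
        rw [Real.sqrt_mul (mul_pos (hp a) (hp b)).le, div_mul_eq_div_div, div_right_comm,
          Real.div_sqrt, div_eq_inv_mul]
      rw [h2, sqrt_gaussPDF_mul _ _ hσ] at h1
      exact h1
    have hintRHS : Integrable (fun x => (Real.sqrt (p a * p b))⁻¹ *
        (Real.exp (-(μ a - μ b) ^ 2 / (8 * σ ^ 2)) * gaussPDF ((μ a + μ b) / 2) σ x)) := by
      exact ((integrable_gaussPDF _ hσ).const_mul _).const_mul _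
    calc ∫ x, g a b σ x ≤ ∫ x, (Real.sqrt (p a * p b))⁻¹ *
          (Real.exp (-(μ a - μ b) ^ 2 / (8 * σ ^ 2)) * gaussPDF ((μ a + μ b) / 2) σ x) :=
        integral_mono (hgint a b hσ) hintRHS hbd
      _ = (Real.sqrt (p a * p b))⁻¹ * Real.exp (-(μ a - μ b) ^ 2 / (8 * σ ^ 2)) := by
        rw [integral_const_mul, integral_const_mul, integral_gaussPDF _ hσ, mul_one]
  -- off-diagonal limit
  have hoff : ∀ (a b : Fin N), a ≠ b →
      Tendsto (fun σ : ℝ => ∫ x, g a b σ x) (nhdsWithin 0 (Set.Ioi 0)) (nhds 0) := by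
    intro a b hab
    have hd : 0 < (μ a - μ b) ^ 2 := by
      have : μ a ≠ μ b := fun h => hab (hμ.injective h)
      have : μ a - μ b ≠ 0 := sub_ne_zero.2 this
      positivity
    have hups : Tendsto (fun σ : ℝ => (Real.sqrt (p a * p b))⁻¹ *
        Real.exp (-(μ a - μ b) ^ 2 / (8 * σ ^ 2))) (nhdsWithin 0 (Set.Ioi 0)) (nhds 0) := by
      have := (exp_neg_div_sq_tendsto hd).const_mul ((Real.sqrt (p a * p b))⁻¹)
      simpa using this
    refine tendsto_of_tendsto_of_tendsto_of_le_of_le' tendsto_const_nhds hups ?_ ?_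
    · filter_upwards [self_mem_nhdsWithin] with σ hσ
      exact integral_nonneg fun x => hgnonneg a b hσ x
    · filter_upwards [self_mem_nhdsWithin] with σ hσ
      exact hoffbound a b hσ
  rcases eq_or_ne i j with rfl | hij
  · -- diagonal case
    simp only [if_pos rfl]
    -- identity: ∑ k, p k * ∫ g i k = 1
    have hkey : ∀ {σ : ℝ}, 0 < σ →
        ∫ x, g i i σ x = (1 - ∑ k ∈ Finset.univ.erase i, p k * ∫ x, g i k σ x) / p i := by
      intro σ hσ
      have hpt : ∀ x, ∑ k, p k * g i k σ x = gaussPDF (μ i) σ x := by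
        intro x
        have : ∑ k, p k * g i k σ x
            = (∑ k, p k * gaussPDF (μ k) σ x) * (gaussPDF (μ i) σ x / S σ x) := by
          rw [Finset.sum_mul]
          refine Finset.sum_congr rfl fun k _ => ?_
          simp only [hg]
          field_simp
        rw [this, show (∑ k, p k * gaussPDF (μ k) σ x) = S σ x from rfl, mul_comm,
          div_mul_eq_mul_div, mul_div_assoc, div_self (hSpos hσ x).ne', mul_one]
      have hsumint : ∑ k, p k * ∫ x, g i k σ x = 1 := by
        have : ∫ x, ∑ k, p k * g i k σ x = ∫ x, gaussPDF (μ i) σ x :=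
          integral_congr_ae (Eventually.of_forall hpt)
        rw [integral_finset_sum _ (fun k _ => (hgint i k hσ).const_mul (p k))] at this
        rw [integral_gaussPDF _ hσ] at this
        simpa [integral_const_mul] using this
      have hsplit : p i * ∫ x, g i i σ x
          = 1 - ∑ k ∈ Finset.univ.erase i, p k * ∫ x, g i k σ x := by
        rw [← hsumint, ← Finset.add_sum_erase _ _ (Finset.mem_univ i)]
        ring
      rw [eq_div_iff (hp i).ne', mul_comm]
      exact hsplit
    have hlim : Tendsto (fun σ : ℝ =>
        (1 - ∑ k ∈ Finset.univ.erase i, p k * ∫ x, g i k σ x) / p i)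
        (nhdsWithin 0 (Set.Ioi 0)) (nhds (1 / p i)) := by
      have hsum0 : Tendsto (fun σ : ℝ => ∑ k ∈ Finset.univ.erase i, p k * ∫ x, g i k σ x)
          (nhdsWithin 0 (Set.Ioi 0)) (nhds 0) := by
        have := tendsto_finset_sum (Finset.univ.erase i)
          (fun k hk => ((hoff i k (fun h => (Finset.ne_of_mem_erase hk) h.symm)).const_mul (p k)))
        simpa using this
      have h1 : Tendsto (fun _ : ℝ => (1 : ℝ)) (nhdsWithin 0 (Set.Ioi 0)) (nhds 1) :=
        tendsto_const_nhds
      have := (h1.sub hsum0).div_const (p i)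
      simpa using this
    refine hlim.congr' ?_
    filter_upwards [self_mem_nhdsWithin] with σ hσ
    exact (hkey hσ).symm
  · simp only [if_neg hij]
    exact hoff i j hij
end

section
/- In the Gaussian mixture model ρ_θ = Σ_{i=1}^{N} p_i N(μ_i, σ²) with p_i = θ_{i-1} - θ_i (θ_0 = 1, θ_N = 0), the Fisher information matrix G_F(θ;σ) with entries ∫ (ρ_{i+1}-ρ_i)(ρ_{j+1}-ρ_j)/ρ_θ dx converges as σ → 0 to the tridiagonal matrix with diagonal entries 1/p_i + 1/p_{i+1}, entry -1/p_i at position (i, i-1), and -1/p_{i+1} at position (i, i+1). -/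
open MeasureTheory Real Filter

namespace FisherAux

lemma gaussPDF_pos {σ : ℝ} (hσ : 0 < σ) (m x : ℝ) : 0 < gaussPDF m σ x := by
  unfold gaussPDF
  have h2 : 0 < Real.sqrt (2 * Real.pi) := Real.sqrt_pos.2 (by positivity)
  positivity

lemma gaussPDF_continuous (m σ : ℝ) : Continuous (fun x => gaussPDF m σ x) := by
  unfold gaussPDF; fun_prop

lemma gaussPDF_eq (m : ℝ) {σ : ℝ} (hσ : 0 < σ) :
    (fun x => gaussPDF m σ x)
      = ProbabilityTheory.gaussianPDFReal m (⟨σ ^ 2, sq_nonneg σ⟩ : NNReal) := by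
  funext x
  show _ = (Real.sqrt (2 * Real.pi * ((⟨σ ^ 2, sq_nonneg σ⟩ : NNReal) : ℝ)))⁻¹
      * Real.exp (-(x - m) ^ 2 / (2 * ((⟨σ ^ 2, sq_nonneg σ⟩ : NNReal) : ℝ)))
  have hc : ((⟨σ ^ 2, sq_nonneg σ⟩ : NNReal) : ℝ) = σ ^ 2 := rfl
  rw [hc, gaussPDF]
  conv_rhs => rw [Real.sqrt_mul (by positivity : (0:ℝ) ≤ 2 * Real.pi), Real.sqrt_sq hσ.le]
  rw [one_div]

lemma gaussPDF_integrable (m : ℝ) {σ : ℝ} (hσ : 0 < σ) :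
    Integrable (fun x => gaussPDF m σ x) := by
  rw [gaussPDF_eq m hσ]
  exact ProbabilityTheory.integrable_gaussianPDFReal m _

lemma gaussPDF_integral (m : ℝ) {σ : ℝ} (hσ : 0 < σ) :
    ∫ x : ℝ, gaussPDF m σ x = 1 := by
  rw [gaussPDF_eq m hσ]
  exact ProbabilityTheory.integral_gaussianPDFReal_eq_one m
    (fun h => (pow_pos hσ 2).ne' (congrArg Subtype.val h))

variable {n : ℕ} {μ p : Fin (n + 1) → ℝ}

lemma S_pos (hp : ∀ i, 0 < p i) {σ : ℝ} (hσ : 0 < σ) (x : ℝ) :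
    0 < ∑ k, p k * gaussPDF (μ k) σ x :=
  Finset.sum_pos (fun k _ => mul_pos (hp k) (gaussPDF_pos hσ _ _)) ⟨0, Finset.mem_univ 0⟩

lemma ratio_le (hp : ∀ i, 0 < p i) {σ : ℝ} (hσ : 0 < σ) (b : Fin (n + 1)) (x : ℝ) :
    gaussPDF (μ b) σ x / (∑ k, p k * gaussPDF (μ k) σ x) ≤ 1 / p b := by
  rw [div_le_div_iff₀ (S_pos hp hσ x) (hp b)]
  calc gaussPDF (μ b) σ x * p b = p b * gaussPDF (μ b) σ x := by ring
    _ ≤ ∑ k, p k * gaussPDF (μ k) σ x :=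
        Finset.single_le_sum (fun k _ => (mul_pos (hp k) (gaussPDF_pos hσ _ _)).le)
          (Finset.mem_univ b)
    _ = 1 * ∑ k, p k * gaussPDF (μ k) σ x := by ring

lemma term_integrable (hp : ∀ i, 0 < p i) {σ : ℝ} (hσ : 0 < σ) (a b : Fin (n + 1)) :
    Integrable (fun x => gaussPDF (μ a) σ x * gaussPDF (μ b) σ x /
      (∑ k, p k * gaussPDF (μ k) σ x)) := by
  refine Integrable.mono ((gaussPDF_integrable (μ a) hσ).const_mul (1 / p b)) ?_ ?_
  · refine Continuous.aestronglyMeasurable (Continuous.div ?_ ?_ fun x => (S_pos hp hσ x).ne')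
    · exact (gaussPDF_continuous _ _).mul (gaussPDF_continuous _ _)
    · exact continuous_finset_sum _ fun k _ => continuous_const.mul (gaussPDF_continuous _ _)
  · refine Filter.Eventually.of_forall fun x => ?_
    have h1 : 0 < gaussPDF (μ a) σ x := gaussPDF_pos hσ _ _
    have h1b : 0 < gaussPDF (μ b) σ x := gaussPDF_pos hσ _ _
    have h2 : 0 ≤ gaussPDF (μ a) σ x * gaussPDF (μ b) σ x /
        (∑ k, p k * gaussPDF (μ k) σ x) :=
      div_nonneg (mul_nonneg h1.le h1b.le) (S_pos hp hσ x).le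
    rw [Real.norm_eq_abs, Real.norm_eq_abs, abs_of_nonneg h2,
      abs_of_nonneg (mul_nonneg (one_div_nonneg.2 (hp b).le) h1.le)]
    rw [mul_div_assoc]
    calc gaussPDF (μ a) σ x * (gaussPDF (μ b) σ x / (∑ k, p k * gaussPDF (μ k) σ x))
        ≤ gaussPDF (μ a) σ x * (1 / p b) := by
          exact mul_le_mul_of_nonneg_left (ratio_le hp hσ b x) h1.le
      _ = 1 / p b * gaussPDF (μ a) σ x := by ring

lemma gaussPDF_ratio {σ : ℝ} (hσ : 0 < σ) (m m' x : ℝ) :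
    gaussPDF m' σ x / gaussPDF m σ x
      = Real.exp ((-(x - m') ^ 2 + (x - m) ^ 2) / (2 * σ ^ 2)) := by
  unfold gaussPDF
  have h2 : 0 < Real.sqrt (2 * Real.pi) := Real.sqrt_pos.2 (by positivity)
  rw [mul_div_mul_left _ _ (by positivity : 1 / (Real.sqrt (2 * Real.pi) * σ) ≠ 0),
    ← Real.exp_sub]
  congr 1
  field_simp
  ring

/-- Limit of `exp` of the rescaled exponent. -/
lemma exp_exponent_tendsto {d y : ℝ} (hd : d ≠ 0) :
    Tendsto (fun σ : ℝ => Real.exp ((-(σ * y + d) ^ 2 + (σ * y) ^ 2) / (2 * σ ^ 2)))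
      (nhdsWithin 0 (Set.Ioi 0)) (nhds 0) := by
  have h1 : Tendsto (fun σ : ℝ => (-(σ * y + d) ^ 2 + (σ * y) ^ 2) / (2 * σ ^ 2))
      (nhdsWithin 0 (Set.Ioi 0)) atBot := by
    have hnum : Tendsto (fun σ : ℝ => -(σ * y + d) ^ 2 + (σ * y) ^ 2)
        (nhdsWithin 0 (Set.Ioi 0)) (nhds (-d ^ 2)) := by
      have hc : Continuous (fun σ : ℝ => -(σ * y + d) ^ 2 + (σ * y) ^ 2) := by fun_prop
      have h := (hc.tendsto 0).mono_left
        (nhdsWithin_le_nhds : nhdsWithin (0:ℝ) (Set.Ioi 0) ≤ nhds 0)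
      simpa using h
    have hden : Tendsto (fun σ : ℝ => (2 * σ ^ 2)⁻¹) (nhdsWithin 0 (Set.Ioi 0)) atTop := by
      refine tendsto_inv_nhdsGT_zero.comp ?_
      rw [tendsto_nhdsWithin_iff]
      constructor
      · have hc : Continuous (fun σ : ℝ => 2 * σ ^ 2) := by fun_prop
        have h := (hc.tendsto 0).mono_left
          (nhdsWithin_le_nhds : nhdsWithin (0:ℝ) (Set.Ioi 0) ≤ nhds 0)
        simpa using h
      · filter_upwards [self_mem_nhdsWithin] with σ (hσ : 0 < σ)
        exact Set.mem_Ioi.2 (by positivity)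
    have hC : -d ^ 2 < 0 := neg_lt_zero.2 (by positivity)
    have h := Filter.Tendsto.neg_mul_atTop hC hnum hden
    simpa only [div_eq_mul_inv] using h
  exact Real.tendsto_exp_atBot.comp h1

lemma phi_eq {σ : ℝ} (hσ : 0 < σ) (m y : ℝ) :
    σ * gaussPDF m σ (σ * y + m) = gaussPDF 0 1 y := by
  unfold gaussPDF
  have h2 : Real.sqrt (2 * Real.pi) ≠ 0 := ne_of_gt (Real.sqrt_pos.2 (by positivity))
  have harg : -(σ * y + m - m) ^ 2 / (2 * σ ^ 2) = -(y - 0) ^ 2 / (2 * 1 ^ 2) := by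
    field_simp
    ring
  rw [harg]
  field_simp

lemma I_tendsto (hμi : Function.Injective μ) (hp : ∀ i, 0 < p i) (a b : Fin (n + 1)) :
    Tendsto (fun σ : ℝ => ∫ x : ℝ, gaussPDF (μ a) σ x * gaussPDF (μ b) σ x /
        (∑ k, p k * gaussPDF (μ k) σ x))
      (nhdsWithin 0 (Set.Ioi 0))
      (nhds (if a = b then 1 / p a else 0)) := by
  set G : ℝ → ℝ → ℝ := fun σ y => gaussPDF (μ b) σ (σ * y + μ a) /
      (∑ k, p k * gaussPDF (μ k) σ (σ * y + μ a)) with hGdef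
  have key : Tendsto (fun σ : ℝ => ∫ y : ℝ, gaussPDF 0 1 y * G σ y)
      (nhdsWithin 0 (Set.Ioi 0)) (nhds (if a = b then 1 / p a else 0)) := by
    have hlim_int : ∫ y : ℝ, gaussPDF 0 1 y * (if a = b then 1 / p a else 0)
        = (if a = b then 1 / p a else 0) := by
      rw [integral_mul_const, gaussPDF_integral 0 one_pos, one_mul]
    rw [← hlim_int]
    refine tendsto_integral_filter_of_dominated_convergence
      (fun y => 1 / p b * gaussPDF 0 1 y) ?_ ?_ ?_ ?_
    · filter_upwards [self_mem_nhdsWithin] with σ (hσ : 0 < σ)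
      refine Continuous.aestronglyMeasurable ?_
      refine (gaussPDF_continuous 0 1).mul (Continuous.div ?_ ?_ ?_)
      · exact (gaussPDF_continuous (μ b) σ).comp (by fun_prop)
      · exact continuous_finset_sum _ fun k _ =>
          continuous_const.mul ((gaussPDF_continuous (μ k) σ).comp (by fun_prop))
      · exact fun y => (S_pos hp hσ _).ne'
    · filter_upwards [self_mem_nhdsWithin] with σ (hσ : 0 < σ)
      refine Filter.Eventually.of_forall fun y => ?_
      have hφ : 0 < gaussPDF 0 1 y := gaussPDF_pos one_pos _ _
      have hGnn : 0 ≤ G σ y :=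
        div_nonneg (gaussPDF_pos hσ _ _).le (S_pos hp hσ _).le
      rw [Real.norm_eq_abs, abs_of_nonneg (mul_nonneg hφ.le hGnn)]
      calc gaussPDF 0 1 y * G σ y ≤ gaussPDF 0 1 y * (1 / p b) :=
            mul_le_mul_of_nonneg_left (ratio_le hp hσ b _) hφ.le
        _ = 1 / p b * gaussPDF 0 1 y := by ring
    · exact (gaussPDF_integrable 0 one_pos).const_mul _
    · refine Filter.Eventually.of_forall fun y => ?_
      have hEk : ∀ k : Fin (n + 1),
          Tendsto (fun σ : ℝ => gaussPDF (μ k) σ (σ * y + μ a)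
              / gaussPDF (μ a) σ (σ * y + μ a))
            (nhdsWithin 0 (Set.Ioi 0)) (nhds (if k = a then 1 else 0)) := by
        intro k
        by_cases hk : k = a
        · subst hk
          rw [if_pos rfl]
          refine Tendsto.congr' ?_ tendsto_const_nhds
          filter_upwards [self_mem_nhdsWithin] with σ (hσ : 0 < σ)
          rw [div_self (gaussPDF_pos hσ _ _).ne']
        · rw [if_neg hk]
          have hd : μ a - μ k ≠ 0 := sub_ne_zero.2 fun h => hk (hμi h.symm)
          refine Tendsto.congr' ?_ (exp_exponent_tendsto (y := y) hd)
          filter_upwards [self_mem_nhdsWithin] with σ (hσ : 0 < σ)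
          rw [gaussPDF_ratio hσ]
          congr 1
          ring
      have hsumE : Tendsto (fun σ : ℝ => ∑ k, p k * (gaussPDF (μ k) σ (σ * y + μ a)
            / gaussPDF (μ a) σ (σ * y + μ a)))
          (nhdsWithin 0 (Set.Ioi 0)) (nhds (p a)) := by
        have h := tendsto_finset_sum (Finset.univ : Finset (Fin (n + 1)))
          (fun k _ => (hEk k).const_mul (p k))
        have : (∑ k, p k * (if k = a then (1:ℝ) else 0)) = p a := by
          simp [mul_ite]
        rwa [this] at h
      have hGy : Tendsto (fun σ : ℝ => G σ y) (nhdsWithin 0 (Set.Ioi 0))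
          (nhds ((if b = a then 1 else 0) / p a)) := by
        have h := Tendsto.div (hEk b) hsumE (hp a).ne'
        refine Tendsto.congr' ?_ h
        filter_upwards [self_mem_nhdsWithin] with σ (hσ : 0 < σ)
        simp only [Pi.div_apply]
        have hρa : gaussPDF (μ a) σ (σ * y + μ a) ≠ 0 := (gaussPDF_pos hσ _ _).ne'
        have hS : (∑ k, p k * gaussPDF (μ k) σ (σ * y + μ a)) ≠ 0 := (S_pos hp hσ _).ne'
        have hsum_eq : (∑ k, p k * (gaussPDF (μ k) σ (σ * y + μ a)
            / gaussPDF (μ a) σ (σ * y + μ a)))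
            = (∑ k, p k * gaussPDF (μ k) σ (σ * y + μ a)) / gaussPDF (μ a) σ (σ * y + μ a) := by
          rw [Finset.sum_div]
          exact Finset.sum_congr rfl fun k _ => (mul_div_assoc _ _ _).symm
        rw [hsum_eq, hGdef]
        rw [div_div_div_cancel_right₀]
        exact hρa
      have hval : ((if b = a then (1:ℝ) else 0) / p a) = (if a = b then 1 / p a else 0) := by
        by_cases hab : a = b
        · simp [hab]
        · simp [hab, Ne.symm hab]
      rw [← hval]
      exact (hGy.const_mul (gaussPDF 0 1 y))
  refine Tendsto.congr' ?_ key
  filter_upwards [self_mem_nhdsWithin] with σ (hσ : 0 < σ)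
  have hpt : ∀ y : ℝ, gaussPDF 0 1 y * G σ y
      = σ * (gaussPDF (μ a) σ (σ * y + μ a) * gaussPDF (μ b) σ (σ * y + μ a)
          / (∑ k, p k * gaussPDF (μ k) σ (σ * y + μ a))) := by
    intro y
    rw [← phi_eq hσ (μ a) y, hGdef]
    ring
  simp only [hpt]
  rw [integral_const_mul]
  have hsub : (∫ y : ℝ, gaussPDF (μ a) σ (σ * y + μ a) * gaussPDF (μ b) σ (σ * y + μ a)
      / (∑ k, p k * gaussPDF (μ k) σ (σ * y + μ a)))
      = |σ⁻¹| • ∫ x : ℝ, gaussPDF (μ a) σ x * gaussPDF (μ b) σ x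
          / (∑ k, p k * gaussPDF (μ k) σ x) := by
    rw [show (fun y : ℝ => gaussPDF (μ a) σ (σ * y + μ a) * gaussPDF (μ b) σ (σ * y + μ a)
        / (∑ k, p k * gaussPDF (μ k) σ (σ * y + μ a)))
        = fun y : ℝ => (fun t : ℝ => gaussPDF (μ a) σ (t + μ a) * gaussPDF (μ b) σ (t + μ a)
          / (∑ k, p k * gaussPDF (μ k) σ (t + μ a))) (σ * y) from rfl]
    rw [MeasureTheory.Measure.integral_comp_mul_left
      (fun t : ℝ => gaussPDF (μ a) σ (t + μ a) * gaussPDF (μ b) σ (t + μ a)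
        / (∑ k, p k * gaussPDF (μ k) σ (t + μ a))) σ]
    congr 1
    exact integral_add_right_eq_self (fun t : ℝ => gaussPDF (μ a) σ t * gaussPDF (μ b) σ t
      / (∑ k, p k * gaussPDF (μ k) σ t)) (μ a)
  rw [hsub, smul_eq_mul, abs_of_pos (inv_pos.2 hσ)]
  rw [← mul_assoc, mul_inv_cancel₀ hσ.ne', one_mul]

end FisherAux

/-- Scaling limit of the Fisher information matrix of a Gaussian mixture model:
components `ρ_k = N(μ_k, σ²)`, `k = 1, …, N` with `N = n + 1`, rows/columns indexed by
`i j : Fin n` (paper indices `i+1, j+1 ∈ {1, …, N-1}`).  The entries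
`∫ (ρ_{i+1} - ρ_i)(ρ_{j+1} - ρ_j)/ρ_θ` converge as `σ → 0⁺` to the tridiagonal matrix with
diagonal `1/p_i + 1/p_{i+1}`, entry `-1/p_i` at `(i, i-1)` and `-1/p_{i+1}` at `(i, i+1)`. -/
theorem fisher_matrix_scaling_limit (n : ℕ) (μ : Fin (n + 1) → ℝ) (hμ : StrictMono μ)
    (p : Fin (n + 1) → ℝ) (hp : ∀ i, 0 < p i) (hsum : ∑ i, p i = 1) (i j : Fin n) :
    Tendsto
      (fun σ : ℝ => ∫ x : ℝ,
        (gaussPDF (μ i.succ) σ x - gaussPDF (μ i.castSucc) σ x) *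
          (gaussPDF (μ j.succ) σ x - gaussPDF (μ j.castSucc) σ x) /
          (∑ k, p k * gaussPDF (μ k) σ x))
      (nhdsWithin 0 (Set.Ioi 0))
      (nhds
        (if i = j then 1 / p i.castSucc + 1 / p i.succ
         else if (i : ℕ) = (j : ℕ) + 1 then -(1 / p i.castSucc)
         else if (j : ℕ) = (i : ℕ) + 1 then -(1 / p i.succ)
         else 0)) := by
  have hinj := hμ.injective
  have h1 := FisherAux.I_tendsto hinj hp i.succ j.succ
  have h2 := FisherAux.I_tendsto hinj hp i.succ j.castSucc
  have h3 := FisherAux.I_tendsto hinj hp i.castSucc j.succ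
  have h4 := FisherAux.I_tendsto hinj hp i.castSucc j.castSucc
  have hcomb := ((h1.sub h2).sub h3).add h4
  have hval : (if i.succ = j.succ then 1 / p i.succ else 0)
      - (if i.succ = j.castSucc then 1 / p i.succ else 0)
      - (if i.castSucc = j.succ then 1 / p i.castSucc else 0)
      + (if i.castSucc = j.castSucc then 1 / p i.castSucc else 0)
      = (if i = j then 1 / p i.castSucc + 1 / p i.succ
         else if (i : ℕ) = (j : ℕ) + 1 then -(1 / p i.castSucc)
         else if (j : ℕ) = (i : ℕ) + 1 then -(1 / p i.succ)
         else 0) := by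
    by_cases hij : i = j
    · subst hij
      have hA : i.succ ≠ i.castSucc := by
        simp [Fin.ext_iff]
      have hB : i.castSucc ≠ i.succ := by
        simp [Fin.ext_iff]
      simp only [if_pos rfl, if_neg hA, if_neg hB, sub_zero]
      simp only [if_true]
      ring
    · have hss : i.succ ≠ j.succ := fun h => hij (Fin.succ_inj.1 h)
      have hcc : i.castSucc ≠ j.castSucc := fun h => hij (Fin.castSucc_inj.1 h)
      have hD : j.succ ≠ j.castSucc := by simp [Fin.ext_iff]
      have hE : j.castSucc ≠ j.succ := by simp [Fin.ext_iff]
      by_cases hij1 : (i : ℕ) = (j : ℕ) + 1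
      · have hcs : i.castSucc = j.succ := by
          rw [Fin.ext_iff]; simp only [Fin.coe_castSucc, Fin.val_succ]; omega
        have hsc : i.succ ≠ j.castSucc := by
          simp only [ne_eq, Fin.ext_iff, Fin.coe_castSucc, Fin.val_succ]; omega
        simp [hij, hij1, hss, hcc, hcs, hsc, hD, hE]
      · by_cases hji1 : (j : ℕ) = (i : ℕ) + 1
        · have hsc : i.succ = j.castSucc := by
            rw [Fin.ext_iff]; simp only [Fin.coe_castSucc, Fin.val_succ]; omega
          have hcs : i.castSucc ≠ j.succ := by
            simp only [ne_eq, Fin.ext_iff, Fin.coe_castSucc, Fin.val_succ]; omega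
          have hF : ¬((i : ℕ) = (i : ℕ) + 1 + 1) := by omega
          simp [hij, hij1, hji1, hss, hcc, hcs, hsc, hD, hE, hF]
        · have hsc : i.succ ≠ j.castSucc := by
            simp only [ne_eq, Fin.ext_iff, Fin.coe_castSucc, Fin.val_succ]; omega
          have hcs : i.castSucc ≠ j.succ := by
            simp only [ne_eq, Fin.ext_iff, Fin.coe_castSucc, Fin.val_succ]; omega
          simp [hij, hij1, hji1, hss, hcc, hcs, hsc, hD, hE]
  rw [hval] at hcomb
  refine Tendsto.congr' ?_ hcomb
  filter_upwards [self_mem_nhdsWithin] with σ (hσ : 0 < σ)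
  have hI := fun a b => FisherAux.term_integrable (μ := μ) hp hσ a b
  have hfun : (fun x : ℝ =>
      (gaussPDF (μ i.succ) σ x - gaussPDF (μ i.castSucc) σ x) *
        (gaussPDF (μ j.succ) σ x - gaussPDF (μ j.castSucc) σ x) /
        (∑ k, p k * gaussPDF (μ k) σ x))
      = fun x : ℝ =>
        gaussPDF (μ i.succ) σ x * gaussPDF (μ j.succ) σ x / (∑ k, p k * gaussPDF (μ k) σ x)
        - gaussPDF (μ i.succ) σ x * gaussPDF (μ j.castSucc) σ x
            / (∑ k, p k * gaussPDF (μ k) σ x)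
        - gaussPDF (μ i.castSucc) σ x * gaussPDF (μ j.succ) σ x
            / (∑ k, p k * gaussPDF (μ k) σ x)
        + gaussPDF (μ i.castSucc) σ x * gaussPDF (μ j.castSucc) σ x
            / (∑ k, p k * gaussPDF (μ k) σ x) := by
    funext x
    ring
  have hsplit : (∫ x : ℝ,
      (gaussPDF (μ i.succ) σ x - gaussPDF (μ i.castSucc) σ x) *
        (gaussPDF (μ j.succ) σ x - gaussPDF (μ j.castSucc) σ x) /
        (∑ k, p k * gaussPDF (μ k) σ x))
      = (∫ x : ℝ, gaussPDF (μ i.succ) σ x * gaussPDF (μ j.succ) σ x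
          / (∑ k, p k * gaussPDF (μ k) σ x))
        - (∫ x : ℝ, gaussPDF (μ i.succ) σ x * gaussPDF (μ j.castSucc) σ x
            / (∑ k, p k * gaussPDF (μ k) σ x))
        - (∫ x : ℝ, gaussPDF (μ i.castSucc) σ x * gaussPDF (μ j.succ) σ x
            / (∑ k, p k * gaussPDF (μ k) σ x))
        + (∫ x : ℝ, gaussPDF (μ i.castSucc) σ x * gaussPDF (μ j.castSucc) σ x
            / (∑ k, p k * gaussPDF (μ k) σ x)) := by
    have h12 : Integrable (fun x : ℝ => gaussPDF (μ i.succ) σ x * gaussPDF (μ j.succ) σ x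
        / (∑ k, p k * gaussPDF (μ k) σ x)
        - gaussPDF (μ i.succ) σ x * gaussPDF (μ j.castSucc) σ x
          / (∑ k, p k * gaussPDF (μ k) σ x)) := (hI i.succ j.succ).sub (hI i.succ j.castSucc)
    have h123 : Integrable (fun x : ℝ => gaussPDF (μ i.succ) σ x * gaussPDF (μ j.succ) σ x
        / (∑ k, p k * gaussPDF (μ k) σ x)
        - gaussPDF (μ i.succ) σ x * gaussPDF (μ j.castSucc) σ x
          / (∑ k, p k * gaussPDF (μ k) σ x)
        - gaussPDF (μ i.castSucc) σ x * gaussPDF (μ j.succ) σ x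
          / (∑ k, p k * gaussPDF (μ k) σ x)) := h12.sub (hI i.castSucc j.succ)
    calc (∫ x : ℝ,
        (gaussPDF (μ i.succ) σ x - gaussPDF (μ i.castSucc) σ x) *
          (gaussPDF (μ j.succ) σ x - gaussPDF (μ j.castSucc) σ x) /
          (∑ k, p k * gaussPDF (μ k) σ x))
        = ∫ x : ℝ, (gaussPDF (μ i.succ) σ x * gaussPDF (μ j.succ) σ x
            / (∑ k, p k * gaussPDF (μ k) σ x)
          - gaussPDF (μ i.succ) σ x * gaussPDF (μ j.castSucc) σ x
            / (∑ k, p k * gaussPDF (μ k) σ x)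
          - gaussPDF (μ i.castSucc) σ x * gaussPDF (μ j.succ) σ x
            / (∑ k, p k * gaussPDF (μ k) σ x))
          + gaussPDF (μ i.castSucc) σ x * gaussPDF (μ j.castSucc) σ x
            / (∑ k, p k * gaussPDF (μ k) σ x) :=
        integral_congr_ae (Filter.Eventually.of_forall fun x => by ring)
      _ = (∫ x : ℝ, gaussPDF (μ i.succ) σ x * gaussPDF (μ j.succ) σ x
            / (∑ k, p k * gaussPDF (μ k) σ x)
          - gaussPDF (μ i.succ) σ x * gaussPDF (μ j.castSucc) σ x
            / (∑ k, p k * gaussPDF (μ k) σ x)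
          - gaussPDF (μ i.castSucc) σ x * gaussPDF (μ j.succ) σ x
            / (∑ k, p k * gaussPDF (μ k) σ x))
          + ∫ x : ℝ, gaussPDF (μ i.castSucc) σ x * gaussPDF (μ j.castSucc) σ x
            / (∑ k, p k * gaussPDF (μ k) σ x) :=
        integral_add h123 (hI i.castSucc j.castSucc)
      _ = _ := by
        rw [integral_sub h12 (hI i.castSucc j.succ),
          integral_sub (hI i.succ j.succ) (hI i.succ j.castSucc)]
  exact hsplit.symm
end

section
/- Fix p, q > 0, d > 0, k > 0, σ > 0. The equation p·(1/(√(2π)σ)) e^{-l²/(2σ²)} = q·(1/(√(2π)kσ)) e^{-(d-l)²/(2k²σ²)} in the unknown l ∈ (0, d) has a unique solution whenever σ is sufficiently small, and this solution satisfies l = d/(k+1) + (kσ²/d) log(kp/q) + o(σ²) as σ → 0. -/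
open MeasureTheory Real Filter Asymptotics

set_option maxHeartbeats 1000000 in
theorem gaussian_matching_condition (p q d k : ℝ) (hp : 0 < p) (hq : 0 < q)
    (hd : 0 < d) (hk : 0 < k) :
    ∃ σ₀ > (0 : ℝ), ∃ l : ℝ → ℝ,
      (∀ σ : ℝ, 0 < σ → σ < σ₀ →
        l σ ∈ Set.Ioo 0 d ∧
        p * (1 / (Real.sqrt (2 * Real.pi) * σ)) * Real.exp (-(l σ) ^ 2 / (2 * σ ^ 2))
          = q * (1 / (Real.sqrt (2 * Real.pi) * (k * σ))) *
              Real.exp (-(d - l σ) ^ 2 / (2 * (k * σ) ^ 2)) ∧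
        ∀ l' ∈ Set.Ioo (0 : ℝ) d,
          p * (1 / (Real.sqrt (2 * Real.pi) * σ)) * Real.exp (-l' ^ 2 / (2 * σ ^ 2))
            = q * (1 / (Real.sqrt (2 * Real.pi) * (k * σ))) *
                Real.exp (-(d - l') ^ 2 / (2 * (k * σ) ^ 2)) → l' = l σ) ∧
      (fun σ : ℝ => l σ - (d / (k + 1) + (k * σ ^ 2 / d) * Real.log (k * p / q)))
        =o[nhdsWithin 0 (Set.Ioi 0)] (fun σ : ℝ => σ ^ 2) := by
  set C := Real.log (k * p / q) with hCdef
  set a : ℝ := 2 * k ^ 2 * C with ha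
  set b : ℝ := d ^ 2 * k ^ 2 with hb
  set c : ℝ := 2 * k ^ 2 * (k ^ 2 - 1) * C with hc
  have hb0 : 0 < b := by rw [hb]; positivity
  have hbval := hb
  set m : ℝ := min (b / 2) (min (d ^ 2 / 2) (d ^ 2 * k / 2)) with hm
  have hm0 : 0 < m := by
    refine lt_min (by positivity) (lt_min (by positivity) (by positivity))
  have hA1 : 0 < |a| + |c| + 1 := by positivity
  set σ₀ : ℝ := Real.sqrt (m / (|a| + |c| + 1)) with hσ₀
  have hσ₀0 : 0 < σ₀ := Real.sqrt_pos.2 (by positivity)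
  have hσ₀sq : σ₀ ^ 2 = m / (|a| + |c| + 1) := Real.sq_sqrt (by positivity)
  have hsqb : Real.sqrt b = d * k := by
    rw [hb, show d ^ 2 * k ^ 2 = (d * k) ^ 2 by ring, Real.sqrt_sq (by positivity)]
  have hac : c = (k ^ 2 - 1) * a := by rw [ha, hc]; ring
  clear_value C a b c m σ₀
  set h : ℝ → ℝ := fun t => (d ^ 2 + a * t) / (d + Real.sqrt (b + c * t)) with hh
  set l : ℝ → ℝ := fun σ => h (σ ^ 2) with hl
  -- the matching condition is equivalent to a quadratic equation
  have hCval : C = Real.log k + Real.log p - Real.log q := by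
    rw [hCdef, Real.log_div (by positivity) hq.ne', Real.log_mul hk.ne' hp.ne']
  have key : ∀ σ x : ℝ, 0 < σ →
      ((p * (1 / (Real.sqrt (2 * Real.pi) * σ)) * Real.exp (-x ^ 2 / (2 * σ ^ 2))
          = q * (1 / (Real.sqrt (2 * Real.pi) * (k * σ))) *
              Real.exp (-(d - x) ^ 2 / (2 * (k * σ) ^ 2)))
        ↔ (k ^ 2 - 1) * x ^ 2 + 2 * d * x - d ^ 2 - 2 * k ^ 2 * σ ^ 2 * C = 0) := by
    intro σ x hσ
    have h2π : 0 < Real.sqrt (2 * Real.pi) := Real.sqrt_pos.2 (by positivity)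
    have e1 : p * (1 / (Real.sqrt (2 * Real.pi) * σ)) * Real.exp (-x ^ 2 / (2 * σ ^ 2))
        = Real.exp (Real.log p - Real.log (Real.sqrt (2 * Real.pi) * σ)
            + -x ^ 2 / (2 * σ ^ 2)) := by
      rw [Real.exp_add, Real.exp_sub, Real.exp_log hp,
        Real.exp_log (by positivity : (0:ℝ) < Real.sqrt (2 * Real.pi) * σ)]
      ring
    have e2 : q * (1 / (Real.sqrt (2 * Real.pi) * (k * σ))) *
          Real.exp (-(d - x) ^ 2 / (2 * (k * σ) ^ 2))
        = Real.exp (Real.log q - Real.log (Real.sqrt (2 * Real.pi) * (k * σ))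
            + -(d - x) ^ 2 / (2 * (k * σ) ^ 2)) := by
      rw [Real.exp_add, Real.exp_sub, Real.exp_log hq,
        Real.exp_log (by positivity : (0:ℝ) < Real.sqrt (2 * Real.pi) * (k * σ))]
      ring
    rw [e1, e2, Real.exp_eq_exp]
    rw [Real.log_mul h2π.ne' hσ.ne',
      Real.log_mul h2π.ne' (by positivity : (k * σ) ≠ 0),
      Real.log_mul hk.ne' hσ.ne']
    have hden : (2 * k ^ 2 * σ ^ 2 : ℝ) ≠ 0 := by positivity
    have h2 : x ^ 2 / (2 * σ ^ 2) - (d - x) ^ 2 / (2 * (k * σ) ^ 2)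
        = (k ^ 2 * x ^ 2 - (d - x) ^ 2) / (2 * k ^ 2 * σ ^ 2) := by
      field_simp
    constructor
    · intro H
      have H' : C = x ^ 2 / (2 * σ ^ 2) - (d - x) ^ 2 / (2 * (k * σ) ^ 2) := by
        rw [hCval]; linear_combination H
      rw [h2, eq_div_iff hden] at H'
      linear_combination -H'
    · intro H
      have H' : C = x ^ 2 / (2 * σ ^ 2) - (d - x) ^ 2 / (2 * (k * σ) ^ 2) := by
        rw [h2, eq_div_iff hden]; linear_combination -H
      rw [hCval] at H'
      linear_combination H'
  refine ⟨σ₀, hσ₀0, l, ?_, ?_⟩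
  · intro σ hσp hσs
    have ht : σ ^ 2 * (|a| + |c| + 1) < m := by
      have h1 : σ ^ 2 < σ₀ ^ 2 := by nlinarith
      rw [hσ₀sq] at h1
      exact (lt_div_iff₀ hA1).1 h1
    have hat : |a| * σ ^ 2 < m := by
      nlinarith [abs_nonneg a, abs_nonneg c, sq_nonneg σ]
    have hct : |c| * σ ^ 2 < m := by
      nlinarith [abs_nonneg a, abs_nonneg c, sq_nonneg σ]
    have hm1 : m ≤ b / 2 := by rw [hm]; exact min_le_left _ _
    have hm2 : m ≤ d ^ 2 / 2 := by
      rw [hm]; exact le_trans (min_le_right _ _) (min_le_left _ _)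
    have hm3 : m ≤ d ^ 2 * k / 2 := by
      rw [hm]; exact le_trans (min_le_right _ _) (min_le_right _ _)
    have hcσ : -|c| * σ ^ 2 ≤ c * σ ^ 2 :=
      mul_le_mul_of_nonneg_right (neg_abs_le c) (sq_nonneg σ)
    have haσ : a * σ ^ 2 ≤ |a| * σ ^ 2 :=
      mul_le_mul_of_nonneg_right (le_abs_self a) (sq_nonneg σ)
    have haσ' : -|a| * σ ^ 2 ≤ a * σ ^ 2 :=
      mul_le_mul_of_nonneg_right (neg_abs_le a) (sq_nonneg σ)
    have hD : b / 2 < b + c * σ ^ 2 := by linarith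
    have hDpos : 0 < b + c * σ ^ 2 := by linarith
    have hsq : Real.sqrt (b + c * σ ^ 2) ^ 2 = b + c * σ ^ 2 :=
      Real.sq_sqrt hDpos.le
    have hsqrt_lb : d * k / 2 ≤ Real.sqrt (b + c * σ ^ 2) := by
      rw [show d * k / 2 = Real.sqrt ((d * k / 2) ^ 2) from
        (Real.sqrt_sq (by positivity)).symm]
      apply Real.sqrt_le_sqrt
      rw [hbval] at hD
      nlinarith [sq_nonneg (d * k)]
    have hM : 0 < d + Real.sqrt (b + c * σ ^ 2) := by
      have := Real.sqrt_nonneg (b + c * σ ^ 2); linarith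
    have hN : 0 < d ^ 2 + a * σ ^ 2 := by linarith
    have hlval : l σ = (d ^ 2 + a * σ ^ 2) / (d + Real.sqrt (b + c * σ ^ 2)) := rfl
    have hmem : l σ ∈ Set.Ioo 0 d := by
      constructor
      · rw [hlval]; positivity
      · rw [hlval, div_lt_iff₀ hM]
        have hdd : d * (d * k / 2) = d ^ 2 * k / 2 := by ring
        have h2 : a * σ ^ 2 < d * (d * k / 2) := by linarith
        linarith [mul_le_mul_of_nonneg_left hsqrt_lb hd.le]
    have hroot : (k ^ 2 - 1) * (l σ) ^ 2 + 2 * d * (l σ) - d ^ 2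
        - 2 * k ^ 2 * σ ^ 2 * C = 0 := by
      set s := Real.sqrt (b + c * σ ^ 2) with hs
      have hkey : (k ^ 2 - 1) * (d ^ 2 + a * σ ^ 2) + 2 * d * (d + s) - (d + s) ^ 2
          = 0 := by
        linear_combination -hsq - hbval - σ ^ 2 * hac
      have hM0 : d + s ≠ 0 := hM.ne'
      have hrw : (k ^ 2 - 1) * ((d ^ 2 + a * σ ^ 2) / (d + s)) ^ 2
            + 2 * d * ((d ^ 2 + a * σ ^ 2) / (d + s)) - d ^ 2 - 2 * k ^ 2 * σ ^ 2 * C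
          = ((k ^ 2 - 1) * (d ^ 2 + a * σ ^ 2) ^ 2
              + 2 * d * (d ^ 2 + a * σ ^ 2) * (d + s)
              - (d ^ 2 + 2 * k ^ 2 * σ ^ 2 * C) * (d + s) ^ 2) / (d + s) ^ 2 := by
        field_simp
        ring
      have hnum0 : (k ^ 2 - 1) * (d ^ 2 + a * σ ^ 2) ^ 2
            + 2 * d * (d ^ 2 + a * σ ^ 2) * (d + s)
            - (d ^ 2 + 2 * k ^ 2 * σ ^ 2 * C) * (d + s) ^ 2 = 0 := by
        linear_combination (d ^ 2 + a * σ ^ 2) * hkey + σ ^ 2 * (d + s) ^ 2 * ha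
      rw [hlval, hrw, hnum0, zero_div]
    refine ⟨hmem, (key σ (l σ) hσp).2 hroot, ?_⟩
    intro l' hl' heq
    have hroot' := (key σ l' hσp).1 heq
    set L := l σ with hL
    clear_value L
    have hfac : 0 < (k ^ 2 - 1) * (l' + L) + 2 * d := by
      obtain ⟨h1, h2⟩ := hl'
      obtain ⟨h3, h4⟩ := hmem
      linarith only [mul_pos (mul_pos hk hk) (add_pos h1 h3), h2, h4]
    have : (l' - L) * ((k ^ 2 - 1) * (l' + L) + 2 * d) = 0 := by
      linear_combination hroot' - hroot
    rcases mul_eq_zero.1 this with h | h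
    · linarith [sub_eq_zero.1 h]
    · exact absurd h hfac.ne'
  · -- asymptotics
    have hinner : HasDerivAt (fun t : ℝ => b + c * t) c 0 := by
      simpa using ((hasDerivAt_id (0:ℝ)).const_mul c).const_add b
    have hb00 : b + c * 0 ≠ 0 := by simpa using hb0.ne'
    have hsqrt : HasDerivAt (fun t : ℝ => Real.sqrt (b + c * t))
        (1 / (2 * Real.sqrt b) * c) 0 := by
      have := (Real.hasDerivAt_sqrt hb00).comp 0 hinner
      simpa [Function.comp_def] using this
    have hden : HasDerivAt (fun t : ℝ => d + Real.sqrt (b + c * t))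
        (1 / (2 * Real.sqrt b) * c) 0 := hsqrt.const_add d
    have hnum : HasDerivAt (fun t : ℝ => d ^ 2 + a * t) a 0 := by
      simpa using ((hasDerivAt_id (0:ℝ)).const_mul a).const_add (d ^ 2)
    have hden0 : d + Real.sqrt (b + c * 0) ≠ 0 := by
      have : 0 < d + Real.sqrt (b + c * 0) := by
        have := Real.sqrt_nonneg (b + c * 0); linarith
      exact this.ne'
    have hdiv := hnum.div hden hden0
    have hderiv : HasDerivAt h (k * C / d) 0 := by
      refine hdiv.congr_deriv ?_
      symm
      simp only [mul_zero, add_zero]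
      rw [hsqb, ha, hc]
      have hdk : (0:ℝ) < d + d * k := by positivity
      field_simp
      ring
    have hlo := hasDerivAt_iff_isLittleO.1 hderiv
    have hφ : Tendsto (fun σ : ℝ => σ ^ 2) (nhdsWithin 0 (Set.Ioi 0)) (nhds 0) := by
      have : Tendsto (fun σ : ℝ => σ ^ 2) (nhds 0) (nhds 0) := by
        simpa using (continuous_pow 2).tendsto (0:ℝ)
      exact this.mono_left nhdsWithin_le_nhds
    have hcomp := hlo.comp_tendsto hφ
    have h00 : h 0 = d / (k + 1) := by
      show (d ^ 2 + a * 0) / (d + Real.sqrt (b + c * 0)) = d / (k + 1)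
      rw [mul_zero, add_zero, mul_zero, add_zero, hsqb]
      rw [div_eq_div_iff (by positivity) (by positivity)]
      ring
    refine hcomp.congr' ?_ ?_
    · refine Filter.EventuallyEq.of_eq (funext fun σ => ?_)
      simp only [Function.comp_apply, h00, sub_zero, smul_eq_mul]
      show h (σ ^ 2) - d / (k + 1) - σ ^ 2 * (k * C / d)
          = h (σ ^ 2) - (d / (k + 1) + k * σ ^ 2 / d * C)
      ring
    · refine Filter.EventuallyEq.of_eq (funext fun σ => ?_)
      simp
end

section
/- Along any solution in the open simplex of the discrete entropy gradient flow ṗ_i = -√(p_i p_{i-1}) log(p_i/p_{i-1}) + √(p_i p_{i+1}) log(p_{i+1}/p_i), the discrete entropy H(p) = Σ_i p_i log p_i is non-increasing: dH/dt = -Σ_{i=1}^{N-1} √(p_i p_{i+1}) (log(p_{i+1}/p_i))² ≤ 0. -/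
open Real

lemma abel_parts (N : ℕ) (hN : 2 ≤ N) (q : ℕ → ℝ) (hq : ∀ i ∈ Finset.Icc 1 N, 0 < q i) :
    ∑ i ∈ Finset.Icc 1 N,
      ((-(if 2 ≤ i then Real.sqrt (q i * q (i-1)) * Real.log (q i / q (i-1)) else 0)
        + (if i + 1 ≤ N then Real.sqrt (q i * q (i+1)) * Real.log (q (i+1) / q i) else 0))
        * (Real.log (q i) + 1))
    = -∑ i ∈ Finset.Icc 1 (N-1),
        Real.sqrt (q i * q (i+1)) * (Real.log (q (i+1) / q i)) ^ 2 := by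
  set J : ℕ → ℝ := fun j => Real.sqrt (q j * q (j+1)) * Real.log (q (j+1) / q j) with hJ
  set f : ℕ → ℝ := fun i => Real.log (q i) + 1 with hf
  have key : ∀ i, ((-(if 2 ≤ i then Real.sqrt (q i * q (i-1)) * Real.log (q i / q (i-1)) else 0)
        + (if i + 1 ≤ N then Real.sqrt (q i * q (i+1)) * Real.log (q (i+1) / q i) else 0))
        * (Real.log (q i) + 1))
      = (if 2 ≤ i then -(J (i-1) * f i) else 0) + (if i + 1 ≤ N then J i * f i else 0) := by
    intro i
    by_cases h2 : 2 ≤ i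
    · obtain ⟨j, rfl⟩ : ∃ j, i = j + 2 := ⟨i - 2, by omega⟩
      by_cases h3 : j + 2 + 1 ≤ N <;>
        simp only [h2, h3, hJ, hf, if_true, if_false,
          show j + 2 - 1 = j + 1 from rfl, mul_comm (q (j+2)) (q (j+1))] <;> ring
    · by_cases h3 : i + 1 ≤ N <;> simp [h2, h3, hJ, hf] <;> ring
  rw [Finset.sum_congr rfl fun i _ => key i, Finset.sum_add_distrib]
  rw [← Finset.sum_filter, ← Finset.sum_filter]
  have e1 : (Finset.Icc 1 N).filter (fun i => 2 ≤ i) = Finset.Icc 2 N := by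
    ext i; simp; omega
  have e2 : (Finset.Icc 1 N).filter (fun i => i + 1 ≤ N) = Finset.Icc 1 (N-1) := by
    ext i; simp; omega
  rw [e1, e2]
  have e3 : ∑ i ∈ Finset.Icc 2 N, -(J (i-1) * f i)
      = ∑ i ∈ Finset.Icc 1 (N-1), -(J i * f (i+1)) := by
    have hmap : Finset.Icc 2 N = Finset.map (addRightEmbedding 1) (Finset.Icc 1 (N-1)) := by
      rw [Finset.map_add_right_Icc]; congr 1; omega
    rw [hmap, Finset.sum_map]
    refine Finset.sum_congr rfl fun i _ => ?_
    simp [addRightEmbedding]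
  rw [e3, ← Finset.sum_add_distrib, ← Finset.sum_neg_distrib]
  refine Finset.sum_congr rfl fun i hi => ?_
  simp only [Finset.mem_Icc] at hi
  have h1 : 0 < q i := hq i (by simp; omega)
  have h2 : 0 < q (i+1) := hq (i+1) (by simp; omega)
  have hlog : Real.log (q (i+1) / q i) = Real.log (q (i+1)) - Real.log (q i) :=
    Real.log_div h2.ne' h1.ne'
  simp only [hJ, hf, hlog]
  ring


/-- Along any solution in the open simplex of the discrete entropy gradient flow,
the discrete entropy `H(p) = ∑ p_i log p_i` is non-increasing:
`dH/dt = -∑_{i=1}^{N-1} √(p_i p_{i+1}) (log(p_{i+1}/p_i))² ≤ 0`. -/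
theorem entropy_flow_dissipation (N : ℕ) (hN : 2 ≤ N) (p : ℝ → ℕ → ℝ)
    (hpos : ∀ t, ∀ i ∈ Finset.Icc 1 N, 0 < p t i)
    (hsum : ∀ t, ∑ i ∈ Finset.Icc 1 N, p t i = 1)
    (hode : ∀ t, ∀ i ∈ Finset.Icc 1 N,
      HasDerivAt (fun s => p s i)
        (-(if 2 ≤ i then
            Real.sqrt (p t i * p t (i - 1)) * Real.log (p t i / p t (i - 1)) else 0)
          + (if i + 1 ≤ N then
            Real.sqrt (p t i * p t (i + 1)) * Real.log (p t (i + 1) / p t i) else 0)) t) :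
    ∀ t,
      HasDerivAt (fun s => ∑ i ∈ Finset.Icc 1 N, p s i * Real.log (p s i))
        (-∑ i ∈ Finset.Icc 1 (N - 1),
          Real.sqrt (p t i * p t (i + 1)) * (Real.log (p t (i + 1) / p t i)) ^ 2) t ∧
      -∑ i ∈ Finset.Icc 1 (N - 1),
          Real.sqrt (p t i * p t (i + 1)) * (Real.log (p t (i + 1) / p t i)) ^ 2 ≤ 0 := by
  intro t
  constructor
  · have hd : ∀ i ∈ Finset.Icc 1 N,
        HasDerivAt (fun s => p s i * Real.log (p s i))
          ((-(if 2 ≤ i then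
              Real.sqrt (p t i * p t (i - 1)) * Real.log (p t i / p t (i - 1)) else 0)
            + (if i + 1 ≤ N then
              Real.sqrt (p t i * p t (i + 1)) * Real.log (p t (i + 1) / p t i) else 0))
            * (Real.log (p t i) + 1)) t := by
      intro i hi
      have h := hode t i hi
      have hq : 0 < p t i := hpos t i hi
      have := h.fun_mul (h.log hq.ne')
      refine this.congr_deriv ?_
      rw [mul_div_assoc', mul_div_cancel_left₀ _ hq.ne']
      ring
    have htot := HasDerivAt.fun_sum hd
    rwa [abel_parts N hN (p t) (hpos t)] at htot
  · rw [neg_nonpos]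
    refine Finset.sum_nonneg fun i hi => ?_
    positivity
end
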